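/- For any linear subspace T of B(H_d), there exist two quantum operations E and F from B(H_d) to B(H_{d'}) for some d', with Choi-Kraus operators {E_j} and {F_k} respectively, such that T = span{E_j†F_k : all j,k}. -/

import Mathlib

open Matrix
open scoped ComplexOrder

section helpers

lemma posSemidef_real_smul {n : Type*} [Fintype n] {M : Matrix n n ℂ}
    (hM : M.PosSemidef) {c : ℝ} (hc : 0 ≤ c) : ((c : ℂ) • M).PosSemidef := by
  constructor
  · show ((c:ℂ) • M)ᴴ = _
    rw [conjTranspose_smul, hM.1.eq]
    simp [Complex.star_def, Complex.conj_ofReal]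
  · intro x
    simpa [Finsupp.mul_sum, mul_assoc, mul_left_comm] using
      smul_nonneg (by exact_mod_cast hc : (0:ℂ) ≤ c) (hM.2 x)

lemma exists_smul_le_one {d : ℕ} {M : Matrix (Fin d) (Fin d) ℂ} (hM : M.PosSemidef)
    (r : ℝ) (hr : 0 < r) :
    ∃ c : ℝ, 0 < c ∧ ((r:ℂ) • 1 - (c:ℂ) • M).PosSemidef := by
  classical
  set t : ℝ := 1 + ∑ i, |hM.1.eigenvalues i| with ht_def
  have ht : 0 < t := by positivity
  have key : ((t:ℂ) • 1 - M).PosSemidef := by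
    have hU : (hM.1.eigenvectorUnitary : Matrix (Fin d) (Fin d) ℂ) *
        (star (hM.1.eigenvectorUnitary : Matrix (Fin d) (Fin d) ℂ)) = 1 :=
      (Matrix.mem_unitaryGroup_iff).mp (hM.1.eigenvectorUnitary).2
    have hrepr : (t:ℂ) • 1 - M = (hM.1.eigenvectorUnitary : Matrix (Fin d) (Fin d) ℂ) *
        diagonal (fun i => ((t - hM.1.eigenvalues i : ℝ) : ℂ)) *
        (hM.1.eigenvectorUnitary : Matrix (Fin d) (Fin d) ℂ)ᴴ := by
      have hdiag : diagonal (fun i => ((t - hM.1.eigenvalues i : ℝ) : ℂ))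
          = (t:ℂ) • 1 - diagonal (RCLike.ofReal ∘ hM.1.eigenvalues) := by
        ext i j
        by_cases h : i = j <;>
          simp [diagonal_apply, one_apply, h, Function.comp, Complex.ofReal_sub]
      rw [hdiag]
      rw [mul_sub, sub_mul]
      rw [mul_smul_comm, smul_mul_assoc, ← star_eq_conjTranspose, mul_one, hU]
      congr 1
      conv_lhs => rw [hM.1.spectral_theorem]
      rw [Unitary.conjStarAlgAut_apply]
    rw [hrepr]
    refine (posSemidef_diagonal_iff.mpr fun i => ?_).mul_mul_conjTranspose_same _
    rw [Complex.zero_le_real]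
    have h1 : hM.1.eigenvalues i ≤ |hM.1.eigenvalues i| := le_abs_self _
    have h2 : |hM.1.eigenvalues i| ≤ ∑ j, |hM.1.eigenvalues j| :=
      Finset.single_le_sum (f := fun j => |hM.1.eigenvalues j|)
        (fun j _ => abs_nonneg _) (Finset.mem_univ i)
    simp only [ht_def]
    linarith
  refine ⟨r / t, div_pos hr ht, ?_⟩
  have heq : (r:ℂ) • (1 : Matrix (Fin d) (Fin d) ℂ) - ((r/t : ℝ):ℂ) • M
      = ((r/t : ℝ):ℂ) • ((t:ℂ) • 1 - M) := by
    rw [smul_sub, smul_smul]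
    congr 2
    push_cast
    field_simp
  rw [heq]
  exact posSemidef_real_smul key (by positivity)

def blk {d m : ℕ} (j : Fin m) (X Y : Matrix (Fin d) (Fin d) ℂ) :
    Matrix (Fin m × (Fin d ⊕ Fin d)) (Fin d) ℂ :=
  fun p q => if p.1 = j then Sum.elim (fun r => X r q) (fun r => Y r q) p.2 else 0

lemma blk_mul {d m : ℕ} (j k : Fin m) (X Y X' Y' : Matrix (Fin d) (Fin d) ℂ) :
    (blk j X Y)ᴴ * blk k X' Y' = if j = k then Xᴴ * X' + Yᴴ * Y' else 0 := by
  by_cases hjk : j = k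
  · subst hjk
    rw [if_pos rfl]
    ext q q'
    rw [mul_apply, Fintype.sum_prod_type]
    rw [Finset.sum_eq_single j]
    · simp [blk, conjTranspose_apply, Fintype.sum_sum_type, Matrix.add_apply, mul_apply]
    · intro i _ hi
      simp [blk, conjTranspose_apply, hi]
    · simp
  · rw [if_neg hjk]
    ext q q'
    rw [mul_apply]
    apply Finset.sum_eq_zero
    rintro ⟨i, s⟩ -
    simp only [conjTranspose_apply, blk]
    by_cases h1 : i = j
    · subst h1
      rw [if_neg hjk]
      simp
    · simp [h1]

lemma exists_spanning_fun {d : ℕ} (T : Submodule ℂ (Matrix (Fin d) (Fin d) ℂ)) :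
    ∃ (n : ℕ) (A : Fin (n+1) → Matrix (Fin d) (Fin d) ℂ),
      Submodule.span ℂ (Set.range A) = T := by
  classical
  obtain ⟨s, hs⟩ := IsNoetherian.noetherian T
  refine ⟨s.card, fun i => if h : (i:ℕ) < s.card then (s.equivFin.symm ⟨i, h⟩ : _) else 0, ?_⟩
  apply le_antisymm
  · rw [Submodule.span_le]
    rintro _ ⟨i, rfl⟩
    by_cases h : (i:ℕ) < s.card
    · simp only [dif_pos h]; rw [← hs]
      exact Submodule.subset_span (s.equivFin.symm ⟨i, h⟩).2
    · simp only [dif_neg h]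
      exact T.zero_mem
  · rw [← hs, Submodule.span_le]
    intro x hx
    set i : Fin s.card := s.equivFin ⟨x, hx⟩ with hi
    have hx' : (fun i : Fin (s.card + 1) =>
        if h : (i:ℕ) < s.card then ((s.equivFin.symm ⟨i, h⟩ : s) : Matrix (Fin d) (Fin d) ℂ) else 0)
        i.castSucc = x := by
      have hlt : ((i.castSucc : Fin (s.card+1)) : ℕ) < s.card := i.2
      simp only [dif_pos hlt]
      have : (⟨((i.castSucc : Fin (s.card+1)) : ℕ), hlt⟩ : Fin s.card) = i := by
        ext; simp
      rw [this, hi, Equiv.symm_apply_apply]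
    exact Submodule.subset_span ⟨i.castSucc, hx'⟩

end helpers

/-- every subspace `T` of `B(H_d)` arises as
`span{E_j† F_k}` for the Choi-Kraus operators of two quantum operations. -/
theorem subspace_from_two_quantum_operations {d : ℕ}
    (T : Submodule ℂ (Matrix (Fin d) (Fin d) ℂ)) :
    ∃ (d' n0 n1 : ℕ) (E : Fin n0 → Matrix (Fin d') (Fin d) ℂ)
      (F : Fin n1 → Matrix (Fin d') (Fin d) ℂ),
      (∑ j, (E j)ᴴ * E j = 1) ∧ (∑ k, (F k)ᴴ * F k = 1) ∧
      T = Submodule.span ℂ (Set.range fun jk : Fin n0 × Fin n1 => (E jk.1)ᴴ * F jk.2) := by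
  classical
  obtain ⟨n, A, hA⟩ := exists_spanning_fun T
  set r : ℝ := 1 / (n+1 : ℕ) with hr_def
  have hr : 0 < r := by positivity
  choose c hc hPSD using fun k : Fin (n+1) =>
    exists_smul_le_one (posSemidef_conjTranspose_mul_self (A k)) r hr
  choose B hB using fun k : Fin (n+1) =>
    (show ∃ B : Matrix (Fin d) (Fin d) ℂ, (r:ℂ) • 1 - (c k:ℂ) • ((A k)ᴴ * A k) = Bᴴ * B by
      open scoped MatrixOrder Matrix.Norms.L2Operator in
      exact CStarAlgebra.nonneg_iff_eq_star_mul_self.mp (hPSD k).nonneg)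
  -- abbreviations
  set s0 : ℂ := (Real.sqrt r : ℂ) with hs0
  set s1 : Fin (n+1) → ℂ := fun k => (Real.sqrt (c k) : ℂ) with hs1
  have hs0s0 : star s0 * s0 = (r : ℂ) := by
    rw [hs0, Complex.star_def, Complex.conj_ofReal, ← Complex.ofReal_mul,
      Real.mul_self_sqrt hr.le]
  have hs1s1 : ∀ k, star (s1 k) * s1 k = (c k : ℂ) := by
    intro k
    rw [hs1, Complex.star_def, Complex.conj_ofReal, ← Complex.ofReal_mul,
      Real.mul_self_sqrt (hc k).le]
  set E0 : Fin (n+1) → Matrix (Fin (n+1) × (Fin d ⊕ Fin d)) (Fin d) ℂ :=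
    fun j => blk j (s0 • 1) 0 with hE0
  set F0 : Fin (n+1) → Matrix (Fin (n+1) × (Fin d ⊕ Fin d)) (Fin d) ℂ :=
    fun k => blk k (s1 k • A k) (B k) with hF0
  -- reindexing
  set e : (Fin (n+1) × (Fin d ⊕ Fin d)) ≃ Fin ((n+1) * (d + d)) :=
    (Equiv.prodCongr (Equiv.refl _) finSumFinEquiv).trans finProdFinEquiv with he
  refine ⟨(n+1) * (d + d), n+1, n+1, fun j => (E0 j).submatrix e.symm id,
    fun k => (F0 k).submatrix e.symm id, ?_, ?_, ?_⟩
  case _ =>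
    have key : ∀ j, ((E0 j).submatrix e.symm id)ᴴ * (E0 j).submatrix e.symm id
        = (r : ℂ) • 1 := by
      intro j
      rw [conjTranspose_submatrix, submatrix_mul_equiv, submatrix_id_id]
      rw [hE0, blk_mul, if_pos rfl]
      rw [conjTranspose_smul, conjTranspose_one, conjTranspose_zero, zero_mul,
        smul_mul_smul_comm, one_mul, hs0s0, add_zero]
    simp_rw [key]
    rw [Finset.sum_const, Finset.card_univ, Fintype.card_fin,
      ← Nat.cast_smul_eq_nsmul ℂ, smul_smul]
    have : (((n+1 : ℕ) : ℂ) * (r : ℂ)) = 1 := by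
      rw [hr_def]
      push_cast
      field_simp
    rw [this, one_smul]
  case _ =>
    have key : ∀ k, ((F0 k).submatrix e.symm id)ᴴ * (F0 k).submatrix e.symm id
        = (r : ℂ) • 1 := by
      intro k
      rw [conjTranspose_submatrix, submatrix_mul_equiv, submatrix_id_id]
      rw [hF0, blk_mul, if_pos rfl]
      rw [conjTranspose_smul, smul_mul_assoc, mul_smul_comm, smul_smul, hs1s1, ← hB k]
      abel
    simp_rw [key]
    rw [Finset.sum_const, Finset.card_univ, Fintype.card_fin,
      ← Nat.cast_smul_eq_nsmul ℂ, smul_smul]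
    have : (((n+1 : ℕ) : ℂ) * (r : ℂ)) = 1 := by
      rw [hr_def]
      push_cast
      field_simp
    rw [this, one_smul]
  case _ =>
    set ρ : Fin (n+1) → ℂ := fun k => star s0 * s1 k with hρ
    have hρ0 : ∀ k, ρ k ≠ 0 := by
      intro k
      rw [hρ]
      apply mul_ne_zero
      · simp only [hs0, Complex.star_def, Complex.conj_ofReal]
        exact_mod_cast (Real.sqrt_pos.mpr hr).ne'
      · simp only [hs1]
        exact_mod_cast (Real.sqrt_pos.mpr (hc k)).ne'
    have key : (fun jk : Fin (n+1) × Fin (n+1) =>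
        ((E0 jk.1).submatrix e.symm id)ᴴ * (F0 jk.2).submatrix e.symm id)
        = fun jk : Fin (n+1) × Fin (n+1) => if jk.1 = jk.2 then ρ jk.2 • A jk.2 else 0 := by
      funext jk
      rw [conjTranspose_submatrix, submatrix_mul_equiv, submatrix_id_id]
      rw [hE0, hF0, blk_mul]
      by_cases h : jk.1 = jk.2
      · rw [if_pos h, if_pos h]
        rw [conjTranspose_smul, conjTranspose_one, conjTranspose_zero, zero_mul, add_zero,
          smul_mul_smul_comm, one_mul, hρ]
      · rw [if_neg h, if_neg h]
    rw [key, ← hA]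
    apply le_antisymm
    · rw [Submodule.span_le]
      rintro _ ⟨k, rfl⟩
      have hmem : (if (k, k).1 = (k, k).2 then ρ (k,k).2 • A (k,k).2 else 0) ∈
          Submodule.span ℂ (Set.range fun jk : Fin (n+1) × Fin (n+1) =>
            if jk.1 = jk.2 then ρ jk.2 • A jk.2 else 0) :=
        Submodule.subset_span ⟨(k, k), rfl⟩
      rw [if_pos rfl] at hmem
      have : A k = (ρ k)⁻¹ • (ρ k • A k) := by
        rw [smul_smul, inv_mul_cancel₀ (hρ0 k), one_smul]
      rw [this]
      exact Submodule.smul_mem _ _ hmem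
    · rw [Submodule.span_le]
      rintro _ ⟨⟨j, k⟩, rfl⟩
      by_cases h : j = k
      · simp only [if_pos h]
        exact Submodule.smul_mem _ _ (Submodule.subset_span ⟨k, rfl⟩)
      · simp only [if_neg h]
        exact Submodule.zero_mem _
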